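/- For each m ∈ {1,2,3}: every vector of the form c^j • R_m (j = 0,…,4) lies on the Clebsch cone, i.e. ∑ i, (c^j • R_m) i = 0 and ∑ i, ((c^j • R_m) i)³ = 0; the five vectors c⁰ • R_m, …, c⁴ • R_m are pairwise non-proportional; for every g ∈ G₂₀ and every j ∈ {0,…,4} there exist j' ∈ {0,…,4} and λ ∈ ℂ, λ ≠ 0, with g • (c^j • R_m) = λ • (c^{j'} • R_m); and for m ≠ m' no c^j • R_m is a scalar multiple of any c^{j'} • R_{m'}. (Hence the sets 𝒪_m = {c^j • R_m : j}, m = 1,2,3, are three distinct G₂₀-orbits of length 5 of projective points on the Clebsch cubic surface.) -/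

import Mathlib

/-- The 5-cycle `(0 1 2 3 4)` on `Fin 5`, sending `i` to `i + 1 (mod 5)`. -/
def c : Equiv.Perm (Fin 5) := finRotate 5

/-- The 4-cycle `(1 2 4 3)` on `Fin 5`, fixing `0`. -/
def d : Equiv.Perm (Fin 5) := ([1, 2, 4, 3] : List (Fin 5)).formPerm

/-- The group `G₂₀ ≅ C₅ ⋊ C₄` generated by `c` and `d`. -/
def G₂₀ : Subgroup (Equiv.Perm (Fin 5)) := Subgroup.closure {c, d}

/-- The linear action of a permutation `g` on vectors: `(g • v) i = v (g⁻¹ i)`. -/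
def permSMul (g : Equiv.Perm (Fin 5)) (v : Fin 5 → ℂ) : Fin 5 → ℂ := fun i => v (g⁻¹ i)

def R₁ : Fin 5 → ℂ := ![0, -1, 1, 1, -1]
def R₂ : Fin 5 → ℂ := ![0, -Complex.I, -1, 1, Complex.I]
def R₃ : Fin 5 → ℂ := ![0, Complex.I, -1, 1, -Complex.I]

/-- The three base points `R₁, R₂, R₃` of the three orbits of length 5. -/
def R : Fin 3 → Fin 5 → ℂ := ![R₁, R₂, R₃]

/- ### Auxiliary lemmas -/

open Fin.NatCast

lemma permSMul_mul (g h : Equiv.Perm (Fin 5)) (v : Fin 5 → ℂ) :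
    permSMul (g * h) v = permSMul g (permSMul h v) := by
  funext i; simp [permSMul, mul_inv_rev]

lemma permSMul_one (v : Fin 5 → ℂ) : permSMul 1 v = v := rfl

lemma permSMul_smul (g : Equiv.Perm (Fin 5)) (lam : ℂ) (v : Fin 5 → ℂ) :
    permSMul g (lam • v) = lam • permSMul g v := rfl

lemma permSMul_inv_smul (g : Equiv.Perm (Fin 5)) (v : Fin 5 → ℂ) :
    permSMul g⁻¹ (permSMul g v) = v := by
  rw [← permSMul_mul, inv_mul_cancel, permSMul_one]

lemma c_pow_apply (k : ℕ) : ∀ i : Fin 5, (c ^ k) i = i + (k : Fin 5) := by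
  induction k with
  | zero => intro i; simp
  | succ k ih =>
    intro i
    have hci : c i = i + 1 := finRotate_succ_apply i
    rw [pow_succ, Equiv.Perm.mul_apply, hci, ih (i + 1)]
    push_cast
    abel

lemma c_pow_inv_apply (k : ℕ) (i : Fin 5) : (c ^ k)⁻¹ i = i - (k : Fin 5) := by
  apply (c ^ k).injective
  rw [← Equiv.Perm.mul_apply, mul_inv_cancel, Equiv.Perm.one_apply, c_pow_apply, sub_add_cancel]

lemma V_apply (m : Fin 3) (k : ℕ) (i : Fin 5) :
    permSMul (c ^ k) (R m) i = R m (i - (k : Fin 5)) := by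
  show R m ((c ^ k)⁻¹ i) = _
  rw [c_pow_inv_apply]

lemma hR0 (m : Fin 3) : R m 0 = 0 := by
  fin_cases m <;> rfl

lemma hR3 (m : Fin 3) : R m 3 = 1 := by
  fin_cases m <;> rfl

lemma hRne (m : Fin 3) (i : Fin 5) (hi : i ≠ 0) : R m i ≠ 0 := by
  fin_cases m <;> fin_cases i <;>
    first
      | exact absurd rfl hi
      | (show (-1 : ℂ) ≠ 0; norm_num)
      | (show (1 : ℂ) ≠ 0; norm_num)
      | (show (-Complex.I) ≠ 0; simp [Complex.I_ne_zero])
      | (show (Complex.I) ≠ 0; simp [Complex.I_ne_zero])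

lemma hR1ne (m m' : Fin 3) (h : m ≠ m') : R m 1 ≠ R m' 1 := by
  fin_cases m <;> fin_cases m' <;> simp_all <;>
    simp only [show R 0 1 = (-1 : ℂ) from rfl, show R 1 1 = -Complex.I from rfl,
      show R 2 1 = Complex.I from rfl] <;>
    simp [Complex.ext_iff] <;> norm_num

/-- Main non-proportionality lemma. -/
lemma nonprop (m m' : Fin 3) (j j' : Fin 5) (h : m ≠ m' ∨ j ≠ j') :
    ¬ ∃ lam : ℂ, permSMul (c ^ (j : ℕ)) (R m) = lam • permSMul (c ^ (j' : ℕ)) (R m') := by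
  rintro ⟨lam, heq⟩
  by_cases hj : j = j'
  · subst hj
    have hm : m ≠ m' := h.resolve_right (fun h' => h' rfl)
    have h3 := congrFun heq (j + 3)
    have h1 := congrFun heq (j + 1)
    simp only [V_apply, Pi.smul_apply, Fin.cast_val_eq_self, add_sub_cancel_left] at h3 h1
    rw [hR3, hR3, smul_eq_mul, mul_one] at h3
    rw [smul_eq_mul, ← h3, one_mul] at h1
    exact hR1ne m m' hm h1
  · have hz := congrFun heq j
    simp only [V_apply, Pi.smul_apply, Fin.cast_val_eq_self, sub_self, hR0,
      smul_eq_mul] at hz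
    have hjj : j - j' ≠ 0 := sub_ne_zero.mpr hj
    have hlam : lam = 0 := by
      rcases mul_eq_zero.mp hz.symm with h' | h'
      · exact h'
      · exact absurd h' (hRne m' _ hjj)
    have h3 := congrFun heq (j + 3)
    simp only [V_apply, Pi.smul_apply, Fin.cast_val_eq_self, add_sub_cancel_left,
      hR3, hlam, smul_eq_mul, zero_mul] at h3
    exact one_ne_zero h3

lemma c_pow_five : c ^ 5 = 1 := by decide

lemma exists_fin_pow (k : ℕ) : ∃ j' : Fin 5, c ^ (j' : ℕ) = c ^ k :=
  ⟨(k : Fin 5), by rw [Fin.val_natCast, ← pow_eq_pow_mod k c_pow_five]⟩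

lemma d_mul_c_pow (k : ℕ) : d * c ^ k = c ^ (2 * k) * d := by
  induction k with
  | zero => simp
  | succ k ih =>
    have hdc : d * c = c ^ 2 * d := by decide
    calc d * c ^ (k + 1) = (d * c ^ k) * c := by rw [pow_succ, mul_assoc]
    _ = c ^ (2 * k) * (d * c) := by rw [ih, mul_assoc]
    _ = c ^ (2 * (k + 1)) * d := by rw [hdc, ← mul_assoc, ← pow_add]; ring_nf

lemma d_smul (m : Fin 3) : ∃ lam : ℂ, lam ≠ 0 ∧ permSMul d (R m) = lam • R m := by
  have hdinv : ∀ i, d⁻¹ i = ![0, 3, 1, 4, 2] i := by decide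
  fin_cases m
  · refine ⟨-1, by norm_num, ?_⟩
    funext i
    fin_cases i <;> simp [permSMul, hdinv, R, R₁]
  · refine ⟨Complex.I, Complex.I_ne_zero, ?_⟩
    funext i
    fin_cases i <;> simp [permSMul, hdinv, R, R₂, Complex.I_mul_I] <;> ring
  · refine ⟨-Complex.I, by simp [Complex.I_ne_zero], ?_⟩
    funext i
    fin_cases i <;> simp [permSMul, hdinv, R, R₃, Complex.I_mul_I] <;> ring

theorem stmt3 :
    (∀ m : Fin 3, ∀ j : Fin 5,
      (∑ i, permSMul (c ^ (j : ℕ)) (R m) i) = 0 ∧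
      (∑ i, (permSMul (c ^ (j : ℕ)) (R m) i) ^ 3) = 0) ∧
    (∀ m : Fin 3, ∀ j j' : Fin 5, j ≠ j' →
      ¬ ∃ lam : ℂ, permSMul (c ^ (j : ℕ)) (R m) = lam • permSMul (c ^ (j' : ℕ)) (R m)) ∧
    (∀ m : Fin 3, ∀ g ∈ G₂₀, ∀ j : Fin 5, ∃ j' : Fin 5, ∃ lam : ℂ, lam ≠ 0 ∧
      permSMul g (permSMul (c ^ (j : ℕ)) (R m)) = lam • permSMul (c ^ (j' : ℕ)) (R m)) ∧
    (∀ m m' : Fin 3, m ≠ m' → ∀ j j' : Fin 5,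
      ¬ ∃ lam : ℂ, permSMul (c ^ (j : ℕ)) (R m) = lam • permSMul (c ^ (j' : ℕ)) (R m')) := by
  have hsum : ∀ m : Fin 3, (∑ i, R m i) = 0 ∧ (∑ i, (R m i) ^ 3) = 0 := by
    intro m
    fin_cases m <;> refine ⟨?_, ?_⟩ <;>
      simp [R, R₁, R₂, R₃, Fin.sum_univ_five] <;> ring_nf <;>
      simp [Complex.I_sq, pow_succ] <;> ring_nf
  refine ⟨?_, ?_, ?_, ?_⟩
  · intro m j
    constructor
    · have : (∑ i, permSMul (c ^ (j : ℕ)) (R m) i) = ∑ i, R m i :=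
        Equiv.sum_comp ((c ^ (j : ℕ))⁻¹ : Equiv.Perm (Fin 5)) (R m)
      rw [this, (hsum m).1]
    · have : (∑ i, (permSMul (c ^ (j : ℕ)) (R m) i) ^ 3) = ∑ i, (R m i) ^ 3 :=
        Equiv.sum_comp ((c ^ (j : ℕ))⁻¹ : Equiv.Perm (Fin 5)) (fun i => (R m i) ^ 3)
      rw [this, (hsum m).2]
  · intro m j j' hjj
    exact nonprop m m j j' (Or.inr hjj)
  · intro m g hg
    induction hg using Subgroup.closure_induction with
    | mem x hx =>
      rcases hx with hx | hx
      · -- x = c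
        subst hx
        intro j
        obtain ⟨j', hj'⟩ := exists_fin_pow ((j : ℕ) + 1)
        refine ⟨j', 1, one_ne_zero, ?_⟩
        rw [← permSMul_mul, hj', one_smul, pow_succ']
      · -- x = d
        subst hx
        intro j
        obtain ⟨lam, hlam, hd⟩ := d_smul m
        obtain ⟨j', hj'⟩ := exists_fin_pow (2 * (j : ℕ))
        refine ⟨j', lam, hlam, ?_⟩
        rw [← permSMul_mul, d_mul_c_pow, permSMul_mul, hd, permSMul_smul, hj']
    | one =>
      intro j
      exact ⟨j, 1, one_ne_zero, by rw [permSMul_one, one_smul]⟩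
    | mul x y _ _ hx hy =>
      intro j
      obtain ⟨j₁, lam₁, hlam₁, h₁⟩ := hy j
      obtain ⟨j₂, lam₂, hlam₂, h₂⟩ := hx j₁
      refine ⟨j₂, lam₂ * lam₁, mul_ne_zero hlam₂ hlam₁, ?_⟩
      rw [permSMul_mul, h₁, permSMul_smul, h₂, smul_smul, mul_comm]
    | inv x _ hx =>
      choose f lam hlam hf using hx
      have hinj : Function.Injective f := by
        intro a b hab
        by_contra hne
        apply nonprop m m a b (Or.inr hne)
        refine ⟨lam a / lam b, ?_⟩
        have : permSMul x (permSMul (c ^ (a : ℕ)) (R m)) =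
            (lam a / lam b) • permSMul x (permSMul (c ^ (b : ℕ)) (R m)) := by
          rw [hf a, hf b, hab, smul_smul, div_mul_cancel₀ _ (hlam b)]
        have := congrArg (permSMul x⁻¹) this
        rwa [permSMul_smul, permSMul_inv_smul, permSMul_inv_smul] at this
      have hsurj : Function.Surjective f := Finite.surjective_of_injective hinj
      intro j
      obtain ⟨k, hk⟩ := hsurj j
      refine ⟨k, (lam k)⁻¹, inv_ne_zero (hlam k), ?_⟩
      have := congrArg (permSMul x⁻¹) (hf k)
      rw [permSMul_smul, permSMul_inv_smul, hk] at this
      rw [this, smul_smul, inv_mul_cancel₀ (hlam k), one_smul]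
  · intro m m' hmm j j'
    exact nonprop m m' j j' (Or.inl hmm)
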